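/- arXiv:2012.14095 — 2 statements merged into one kernel-verified Lean document; each statement's English description precedes it below -/
import Mathlib

section
/- (Theorem 7, MAX player; Newman, Althöfer, Lipton–Young.) Let r ≥ 1 and c ≥ 1 be naturals, let M : Fin r → Fin c → ℝ be a matrix, let ε > 0 be a real number, and let k ≥ 1 be a natural number with (k : ℝ) ≥ Real.log r / (2·ε²). Then there exists a multiset T of elements of Fin c with card T = k such that for every i ∈ Fin r, (∑_{j ∈ T} M i j) / k ≥ v'(M) − ε·(Mmax − Mmin), where the sum is over the multiset T with multiplicity. -/
/-- The largest entry of the matrix `M`. -/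
noncomputable def Mmax {r c : ℕ} (M : Fin r → Fin c → ℝ) : ℝ :=
  ⨆ i : Fin r, ⨆ j : Fin c, M i j

/-- The smallest entry of the matrix `M`. -/
noncomputable def Mmin {r c : ℕ} (M : Fin r → Fin c → ℝ) : ℝ :=
  ⨅ i : Fin r, ⨅ j : Fin c, M i j

/-- The MAX-value of the zero-sum game with payoff matrix `M`: the supremum over
mixed strategies `q` of the column player of the minimum over pure strategies `i`
of the row player of the expected payoff. -/
noncomputable def maxValue {r c : ℕ} (M : Fin r → Fin c → ℝ) : ℝ :=
  ⨆ q : {q : Fin c → ℝ // (∀ j, 0 ≤ q j) ∧ ∑ j, q j = 1},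
    ⨅ i : Fin r, ∑ j, q.1 j * M i j


private lemma den_pos (p : ℝ) (hp0 : 0 ≤ p) (hp1 : p ≤ 1) (t : ℝ) :
    0 < 1 - p + p * Real.exp t := by
  rcases le_or_gt (Real.exp t) 1 with h | h
  · nlinarith [Real.exp_pos t]
  · nlinarith

private lemma log_core (p : ℝ) (hp0 : 0 ≤ p) (hp1 : p ≤ 1) (h : ℝ) :
    Real.log (1 - p + p * Real.exp h) ≤ p * h + h ^ 2 / 8 := by
  set f : ℝ → ℝ := fun t => t ^ 2 / 8 + p * t - Real.log (1 - p + p * Real.exp t) with hf_def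
  set f' : ℝ → ℝ := fun t => t / 4 + p - p * Real.exp t / (1 - p + p * Real.exp t) with hf'_def
  have hden : ∀ t, 0 < 1 - p + p * Real.exp t := den_pos p hp0 hp1
  have hderiv : ∀ t, HasDerivAt f (f' t) t := by
    intro t
    have h1 : HasDerivAt (fun t => 1 - p + p * Real.exp t) (p * Real.exp t) t := by
      simpa using ((Real.hasDerivAt_exp t).const_mul p).const_add (1 - p)
    have h2 : HasDerivAt (fun t => Real.log (1 - p + p * Real.exp t))
        (p * Real.exp t / (1 - p + p * Real.exp t)) t := h1.log (hden t).ne'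
    have h3 : HasDerivAt (fun t : ℝ => t ^ 2 / 8 + p * t) (t / 4 + p) t := by
      have := ((hasDerivAt_pow 2 t).div_const 8).add ((hasDerivAt_id t).const_mul p)
      refine this.congr_deriv ?_
      simp; ring
    exact h3.sub h2
  have hderiv' : ∀ t, HasDerivAt f'
      (1 / 4 - (p * Real.exp t * (1 - p + p * Real.exp t) - p * Real.exp t * (p * Real.exp t)) /
        (1 - p + p * Real.exp t) ^ 2) t := by
    intro t
    have h1 : HasDerivAt (fun t => 1 - p + p * Real.exp t) (p * Real.exp t) t := by
      simpa using ((Real.hasDerivAt_exp t).const_mul p).const_add (1 - p)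
    have h2 : HasDerivAt (fun t => p * Real.exp t) (p * Real.exp t) t :=
      (Real.hasDerivAt_exp t).const_mul p
    have h3 : HasDerivAt (fun t => p * Real.exp t / (1 - p + p * Real.exp t))
        ((p * Real.exp t * (1 - p + p * Real.exp t) - p * Real.exp t * (p * Real.exp t)) /
          (1 - p + p * Real.exp t) ^ 2) t := h2.div h1 (hden t).ne'
    have h4 : HasDerivAt (fun t : ℝ => t / 4 + p) (1 / 4) t := by
      simpa using ((hasDerivAt_id t).div_const 4).add_const p
    exact h4.sub h3
  have hsecond_nonneg : ∀ t, 0 ≤ 1 / 4 -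
      (p * Real.exp t * (1 - p + p * Real.exp t) - p * Real.exp t * (p * Real.exp t)) /
        (1 - p + p * Real.exp t) ^ 2 := by
    intro t
    have hd : 0 < 1 - p + p * Real.exp t := hden t
    rw [sub_nonneg, div_le_iff₀ (by positivity)]
    nlinarith [sq_nonneg ((1 - p + p * Real.exp t) - 2 * (p * Real.exp t))]
  have hf'mono : Monotone f' :=
    monotone_of_hasDerivAt_nonneg hderiv' hsecond_nonneg
  have hf'0 : f' 0 = 0 := by
    have h1 : (1:ℝ) - p + p * Real.exp 0 = 1 := by simp
    simp [hf'_def, h1]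
  have hf0 : f 0 = 0 := by
    have h1 : (1:ℝ) - p + p * Real.exp 0 = 1 := by simp
    simp [hf_def, h1]
  have key : 0 ≤ f h := by
    rcases le_or_gt 0 h with hh | hh
    · have hmono : MonotoneOn f (Set.Ici (0:ℝ)) := by
        apply monotoneOn_of_hasDerivWithinAt_nonneg (convex_Ici 0)
          (fun t _ => (hderiv t).continuousAt.continuousWithinAt)
          (fun t ht => (hderiv t).hasDerivWithinAt)
        intro t ht
        rw [interior_Ici] at ht
        rw [← hf'0]
        exact hf'mono ht.le
      have := hmono Set.self_mem_Ici hh hh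
      rwa [hf0] at this
    · have hmono : AntitoneOn f (Set.Iic (0:ℝ)) := by
        apply antitoneOn_of_hasDerivWithinAt_nonpos (convex_Iic 0)
          (fun t _ => (hderiv t).continuousAt.continuousWithinAt)
          (fun t ht => (hderiv t).hasDerivWithinAt)
        intro t ht
        rw [interior_Iic] at ht
        rw [← hf'0]
        exact hf'mono ht.le
      have := hmono hh.le Set.self_mem_Iic hh.le
      rwa [hf0] at this
  have : Real.log (1 - p + p * Real.exp h) ≤ h ^ 2 / 8 + p * h := by
    simp only [hf_def] at key; linarith
  linarith

private lemma hoeffding_sum {c : ℕ} (q x : Fin c → ℝ) (hq0 : ∀ j, 0 ≤ q j)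
    (hq1 : ∑ j, q j = 1) (mn mx s : ℝ)
    (h1 : ∀ j, mn ≤ x j) (h2 : ∀ j, x j ≤ mx) :
    ∑ j, q j * Real.exp (s * x j) ≤
      Real.exp (s * (∑ j, q j * x j) + s ^ 2 * (mx - mn) ^ 2 / 8) := by
  set μ := ∑ j, q j * x j with hμ_def
  have hμ1 : mn ≤ μ := by
    calc mn = ∑ j, q j * mn := by rw [← Finset.sum_mul, hq1, one_mul]
    _ ≤ ∑ j, q j * x j := Finset.sum_le_sum fun j _ =>
        mul_le_mul_of_nonneg_left (h1 j) (hq0 j)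
  have hμ2 : μ ≤ mx := by
    calc μ ≤ ∑ j, q j * mx := Finset.sum_le_sum fun j _ =>
        mul_le_mul_of_nonneg_left (h2 j) (hq0 j)
    _ = mx := by rw [← Finset.sum_mul, hq1, one_mul]
  rcases eq_or_lt_of_le (hμ1.trans hμ2) with heq | hlt
  · -- mn = mx : all x j equal to mn
    have hx : ∀ j, x j = mn := fun j => le_antisymm (heq ▸ h2 j) (h1 j)
    have hμ : μ = mn := by
      rw [hμ_def]
      calc ∑ j, q j * x j = ∑ j, q j * mn := by
            exact Finset.sum_congr rfl fun j _ => by rw [hx j]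
      _ = mn := by rw [← Finset.sum_mul, hq1, one_mul]
    have : ∑ j, q j * Real.exp (s * x j) = Real.exp (s * mn) := by
      calc ∑ j, q j * Real.exp (s * x j) = ∑ j, q j * Real.exp (s * mn) := by
            exact Finset.sum_congr rfl fun j _ => by rw [hx j]
      _ = Real.exp (s * mn) := by rw [← Finset.sum_mul, hq1, one_mul]
    rw [this, hμ]
    apply Real.exp_le_exp.2
    nlinarith [sq_nonneg (s * (mx - mn))]
  · have hd : 0 < mx - mn := sub_pos.2 hlt
    set p := (μ - mn) / (mx - mn) with hp_def
    have hp0 : 0 ≤ p := div_nonneg (by linarith) hd.le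
    have hp1 : p ≤ 1 := (div_le_one hd).2 (by linarith)
    have key : ∀ j, Real.exp (s * x j) ≤
        ((mx - x j) / (mx - mn)) * Real.exp (s * mn) +
          ((x j - mn) / (mx - mn)) * Real.exp (s * mx) := by
      intro j
      have ha : 0 ≤ (mx - x j) / (mx - mn) := div_nonneg (by linarith [h2 j]) hd.le
      have hb : 0 ≤ (x j - mn) / (mx - mn) := div_nonneg (by linarith [h1 j]) hd.le
      have hab : (mx - x j) / (mx - mn) + (x j - mn) / (mx - mn) = 1 := by
        field_simp
        ring
      have hconv := convexOn_exp.2 (Set.mem_univ (s * mn)) (Set.mem_univ (s * mx)) ha hb hab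
      simp only [smul_eq_mul] at hconv
      have harg : (mx - x j) / (mx - mn) * (s * mn) + (x j - mn) / (mx - mn) * (s * mx)
          = s * x j := by
        field_simp
        ring
      rwa [harg] at hconv
    calc ∑ j, q j * Real.exp (s * x j)
        ≤ ∑ j, q j * (((mx - x j) / (mx - mn)) * Real.exp (s * mn) +
            ((x j - mn) / (mx - mn)) * Real.exp (s * mx)) :=
          Finset.sum_le_sum fun j _ => mul_le_mul_of_nonneg_left (key j) (hq0 j)
      _ = (1 - p) * Real.exp (s * mn) + p * Real.exp (s * mx) := by
          have hsum1 : ∑ j, q j * (mx - x j) = mx - μ := by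
            simp only [mul_sub]
            rw [Finset.sum_sub_distrib, ← Finset.sum_mul, hq1, one_mul, hμ_def]
          have hsum2 : ∑ j, q j * (x j - mn) = μ - mn := by
            simp only [mul_sub]
            rw [Finset.sum_sub_distrib, ← Finset.sum_mul, hq1, one_mul, hμ_def]
          have e1 : ∑ j, q j * ((mx - x j) / (mx - mn)) = 1 - p := by
            have estep : ∑ j, q j * ((mx - x j) / (mx - mn))
                = (∑ j, q j * (mx - x j)) / (mx - mn) := by
              rw [Finset.sum_div]
              exact Finset.sum_congr rfl fun j _ => by ring
            rw [estep, hsum1, hp_def]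
            field_simp
            ring
          have e2 : ∑ j, q j * ((x j - mn) / (mx - mn)) = p := by
            have estep : ∑ j, q j * ((x j - mn) / (mx - mn))
                = (∑ j, q j * (x j - mn)) / (mx - mn) := by
              rw [Finset.sum_div]
              exact Finset.sum_congr rfl fun j _ => by ring
            rw [estep, hsum2, hp_def]
          calc ∑ j, q j * (((mx - x j) / (mx - mn)) * Real.exp (s * mn) +
                ((x j - mn) / (mx - mn)) * Real.exp (s * mx))
              = (∑ j, q j * ((mx - x j) / (mx - mn))) * Real.exp (s * mn) +
                (∑ j, q j * ((x j - mn) / (mx - mn))) * Real.exp (s * mx) := by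
                simp only [mul_add, ← mul_assoc]
                rw [Finset.sum_add_distrib, Finset.sum_mul, Finset.sum_mul]
            _ = (1 - p) * Real.exp (s * mn) + p * Real.exp (s * mx) := by rw [e1, e2]
      _ = Real.exp (s * mn) * (1 - p + p * Real.exp (s * (mx - mn))) := by
          rw [show s * mx = s * mn + s * (mx - mn) by ring, Real.exp_add]
          ring
      _ ≤ Real.exp (s * mn) * Real.exp (p * (s * (mx - mn)) + (s * (mx - mn)) ^ 2 / 8) := by
          apply mul_le_mul_of_nonneg_left _ (Real.exp_pos _).le
          rw [← Real.exp_log (den_pos p hp0 hp1 (s * (mx - mn)))]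
          exact Real.exp_le_exp.2 (log_core p hp0 hp1 (s * (mx - mn)))
      _ ≤ Real.exp (s * μ + s ^ 2 * (mx - mn) ^ 2 / 8) := by
          rw [← Real.exp_add]
          apply Real.exp_le_exp.2
          have hpd : p * (mx - mn) = μ - mn := by
            rw [hp_def]; field_simp
          have h5 : p * (s * (mx - mn)) = s * (μ - mn) := by
            rw [show p * (s * (mx - mn)) = s * (p * (mx - mn)) by ring, hpd]
          have h6 : (s * (mx - mn)) ^ 2 = s ^ 2 * (mx - mn) ^ 2 := by ring
          linarith [h5, h6]

private lemma sum_prod_pow {c k : ℕ} (f : Fin c → ℝ) :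
    ∑ ω : Fin k → Fin c, ∏ m, f (ω m) = (∑ j, f j) ^ k := by
  rw [Finset.sum_pow', Fintype.piFinset_univ]

private lemma entry_le_Mmax {r c : ℕ} (M : Fin r → Fin c → ℝ) (i : Fin r) (j : Fin c) :
    M i j ≤ Mmax M := by
  have h1 : M i j ≤ ⨆ j, M i j := le_ciSup (Finite.bddAbove_range _) j
  exact h1.trans (le_ciSup (f := fun i => ⨆ j, M i j) (Finite.bddAbove_range _) i)

private lemma Mmin_le_entry {r c : ℕ} (M : Fin r → Fin c → ℝ) (i : Fin r) (j : Fin c) :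
    Mmin M ≤ M i j := by
  have h1 : ⨅ j, M i j ≤ M i j := ciInf_le (Finite.bddBelow_range _) j
  exact (ciInf_le (f := fun i => ⨅ j, M i j) (Finite.bddBelow_range _) i).trans h1

private lemma maxValue_attained {r c : ℕ} (hr : 1 ≤ r) (hc : 1 ≤ c)
    (M : Fin r → Fin c → ℝ) :
    ∃ q : Fin c → ℝ, (∀ j, 0 ≤ q j) ∧ ∑ j, q j = 1 ∧
      ∀ i, maxValue M ≤ ∑ j, q j * M i j := by
  have hrne : Nonempty (Fin r) := ⟨⟨0, hr⟩⟩
  have hcne : Nonempty (Fin c) := ⟨⟨0, hc⟩⟩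
  have hne : (Finset.univ : Finset (Fin r)).Nonempty := Finset.univ_nonempty
  set g : (Fin c → ℝ) → ℝ :=
    fun q => Finset.univ.inf' hne (fun i => ∑ j, q j * M i j) with hg_def
  have hgcont : Continuous g := by
    apply Continuous.finset_inf'_apply
    intro i _
    exact continuous_finset_sum _ fun j _ =>
      (continuous_apply j).mul continuous_const
  have hSne : (stdSimplex ℝ (Fin c)).Nonempty :=
    ⟨_, single_mem_stdSimplex ℝ (Classical.arbitrary (Fin c))⟩
  obtain ⟨q, hqmem, hqmax⟩ :=
    (isCompact_stdSimplex ℝ (Fin c)).exists_isMaxOn hSne hgcont.continuousOn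
  refine ⟨q, hqmem.1, hqmem.2, fun i => ?_⟩
  have hsup : maxValue M ≤ g q := by
    have : Nonempty {q : Fin c → ℝ // (∀ j, 0 ≤ q j) ∧ ∑ j, q j = 1} :=
      ⟨⟨q, hqmem.1, hqmem.2⟩⟩
    apply ciSup_le
    intro q'
    have h1 : ⨅ i, ∑ j, q'.1 j * M i j
        = Finset.univ.inf' hne (fun i => ∑ j, q'.1 j * M i j) :=
      (Finset.inf'_univ_eq_ciInf _).symm
    rw [h1]
    exact hqmax ⟨q'.2.1, q'.2.2⟩
  exact hsup.trans (Finset.inf'_le _ (Finset.mem_univ i))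

theorem stmt7 {r c : ℕ} (hr : 1 ≤ r) (hc : 1 ≤ c) (M : Fin r → Fin c → ℝ)
    (ε : ℝ) (hε : 0 < ε) (k : ℕ) (hk : 1 ≤ k)
    (hklog : (k : ℝ) ≥ Real.log r / (2 * ε ^ 2)) :
    ∃ T : Multiset (Fin c), Multiset.card T = k ∧
      ∀ i : Fin r,
        (T.map (fun j => M i j)).sum / (k : ℝ) ≥
          maxValue M - ε * (Mmax M - Mmin M) := by
  have hrne : Nonempty (Fin r) := ⟨⟨0, hr⟩⟩
  have hcne : Nonempty (Fin c) := ⟨⟨0, hc⟩⟩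
  obtain ⟨q, hq0, hq1, hqv⟩ := maxValue_attained hr hc M
  set v := maxValue M with hv_def
  set mn := Mmin M with hmn_def
  set mx := Mmax M with hmx_def
  have hkpos : (0:ℝ) < (k:ℝ) := by exact_mod_cast hk
  suffices hmain : ∃ ω : Fin k → Fin c,
      ∀ i, (k : ℝ) * (v - ε * (mx - mn)) ≤ ∑ m, M i (ω m) by
    obtain ⟨ω, hω⟩ := hmain
    refine ⟨Multiset.map ω Finset.univ.val, by simp, fun i => ?_⟩
    have hsum : ((Multiset.map ω Finset.univ.val).map (fun j => M i j)).sum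
        = ∑ m, M i (ω m) := by
      rw [Multiset.map_map]; rfl
    rw [ge_iff_le, hsum, le_div_iff₀ hkpos]
    linarith [hω i]
  have hDnn : 0 ≤ mx - mn := by
    have h1 := Mmin_le_entry M ⟨0, hr⟩ ⟨0, hc⟩
    have h2 := entry_le_Mmax M ⟨0, hr⟩ ⟨0, hc⟩
    rw [← hmn_def] at h1; rw [← hmx_def] at h2
    linarith
  rcases eq_or_lt_of_le hDnn with hD0 | hDpos
  · -- degenerate case : all entries equal
    refine ⟨fun _ => ⟨0, hc⟩, fun i => ?_⟩
    have hall : ∀ j, M i j = mn := by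
      intro j
      have h1 := Mmin_le_entry M i j
      have h2 := entry_le_Mmax M i j
      rw [← hmn_def] at h1; rw [← hmx_def] at h2
      linarith
    have hv_le : v ≤ mn := by
      have h3 := hqv i
      have h4 : ∑ j, q j * M i j = mn := by
        calc ∑ j, q j * M i j = ∑ j, q j * mn :=
              Finset.sum_congr rfl fun j _ => by rw [hall j]
          _ = mn := by rw [← Finset.sum_mul, hq1, one_mul]
      linarith
    have h5 : ∑ m : Fin k, M i ((fun _ => (⟨0, hc⟩ : Fin c)) m) = (k:ℝ) * mn := by
      simp [hall]
    rw [h5, ← hD0]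
    have h6 := mul_le_mul_of_nonneg_left hv_le hkpos.le
    linarith [h6]
  · -- main case
    have hDpos' : 0 < mx - mn := hDpos
    set s : ℝ := 4 * ε / (mx - mn) with hs_def
    have hspos : 0 < s := by rw [hs_def]; positivity
    set a : ℝ := (k : ℝ) * (v - ε * (mx - mn)) with ha_def
    have hp0 : ∀ ω : Fin k → Fin c, 0 ≤ ∏ m, q (ω m) :=
      fun ω => Finset.prod_nonneg fun m _ => hq0 _
    have hp1 : ∑ ω : Fin k → Fin c, ∏ m, q (ω m) = 1 := by
      rw [sum_prod_pow q, hq1, one_pow]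
    have hrow : ∀ i, ∑ ω : Fin k → Fin c,
        (∏ m, q (ω m)) * (if (∑ m, M i (ω m)) < a then (1:ℝ) else 0) < 1 / r := by
      intro i
      have hμv : v ≤ ∑ j, q j * M i j := hqv i
      have hstep1 : ∑ ω : Fin k → Fin c,
          (∏ m, q (ω m)) * (if (∑ m, M i (ω m)) < a then (1:ℝ) else 0)
          < ∑ ω : Fin k → Fin c,
            (∏ m, q (ω m)) * Real.exp (s * (a - ∑ m, M i (ω m))) := by
        apply Finset.sum_lt_sum
        · intro ω _
          apply mul_le_mul_of_nonneg_left _ (hp0 ω)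
          split_ifs with hcond
          · exact (Real.one_lt_exp_iff.2 (mul_pos hspos (sub_pos.2 hcond))).le
          · positivity
        · have hex : ∃ ω ∈ (Finset.univ : Finset (Fin k → Fin c)),
              0 < ∏ m, q (ω m) := by
            by_contra hno
            push_neg at hno
            have : ∑ ω : Fin k → Fin c, ∏ m, q (ω m) ≤ 0 :=
              Finset.sum_nonpos fun ω hω => hno ω hω
            linarith [hp1]
          obtain ⟨ω₀, hω₀mem, hω₀⟩ := hex
          refine ⟨ω₀, hω₀mem, ?_⟩
          apply mul_lt_mul_of_pos_left _ hω₀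
          split_ifs with hcond
          · exact Real.one_lt_exp_iff.2 (mul_pos hspos (sub_pos.2 hcond))
          · exact Real.exp_pos _
      have hstep2 : ∑ ω : Fin k → Fin c,
          (∏ m, q (ω m)) * Real.exp (s * (a - ∑ m, M i (ω m)))
          = Real.exp (s * a) * (∑ j, q j * Real.exp (-s * M i j)) ^ k := by
        rw [← sum_prod_pow (fun j => q j * Real.exp (-s * M i j)), Finset.mul_sum]
        apply Finset.sum_congr rfl
        intro ω _
        have hexp : s * (a - ∑ m, M i (ω m)) = s * a + ∑ m, -s * M i (ω m) := by
          rw [← Finset.mul_sum]; ring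
        rw [hexp, Real.exp_add, Real.exp_sum, Finset.prod_mul_distrib]
        ring
      have hstep3 : ∑ j, q j * Real.exp (-s * M i j)
          ≤ Real.exp (-s * (∑ j, q j * M i j) + s ^ 2 * (mx - mn) ^ 2 / 8) := by
        have h := hoeffding_sum q (fun j => M i j) hq0 hq1 mn mx (-s)
          (fun j => Mmin_le_entry M i j) (fun j => entry_le_Mmax M i j)
        rw [show (-s) ^ 2 = s ^ 2 by ring] at h
        exact h
      have hsum_nonneg : 0 ≤ ∑ j, q j * Real.exp (-s * M i j) :=
        Finset.sum_nonneg fun j _ => mul_nonneg (hq0 j) (Real.exp_pos _).le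
      have hstep4 : (∑ j, q j * Real.exp (-s * M i j)) ^ k
          ≤ Real.exp ((k:ℝ) *
            (-s * (∑ j, q j * M i j) + s ^ 2 * (mx - mn) ^ 2 / 8)) := by
        rw [Real.exp_nat_mul]
        exact pow_le_pow_left₀ hsum_nonneg hstep3 k
      have hsεD : s * ε * (mx - mn) = 4 * ε ^ 2 := by
        rw [hs_def]; field_simp
      have hs2D2 : s ^ 2 * (mx - mn) ^ 2 = 16 * ε ^ 2 := by
        rw [hs_def]; field_simp; ring
      have e1 : s * a = (k:ℝ) * s * v - 4 * (k:ℝ) * ε ^ 2 := by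
        rw [ha_def]
        linear_combination (-(k:ℝ)) * hsεD
      have e3 : (k:ℝ) * (s * v) ≤ (k:ℝ) * (s * ∑ j, q j * M i j) :=
        mul_le_mul_of_nonneg_left (mul_le_mul_of_nonneg_left hμv hspos.le) hkpos.le
      have hexp_le : s * a + (k:ℝ) *
          (-s * (∑ j, q j * M i j) + s ^ 2 * (mx - mn) ^ 2 / 8)
          ≤ -(2 * (k:ℝ) * ε ^ 2) := by
        have e2 : (k:ℝ) * (s ^ 2 * (mx - mn) ^ 2 / 8) = 2 * (k:ℝ) * ε ^ 2 := by
          linear_combination ((k:ℝ) / 8) * hs2D2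
        nlinarith [e1, e2, e3]
      have hrpos : (0:ℝ) < r := by exact_mod_cast hr
      have hfinal : Real.exp (s * a) * Real.exp ((k:ℝ) *
          (-s * (∑ j, q j * M i j) + s ^ 2 * (mx - mn) ^ 2 / 8)) ≤ 1 / r := by
        rw [← Real.exp_add]
        have hlogr : Real.log r ≤ 2 * (k:ℝ) * ε ^ 2 := by
          rw [ge_iff_le, div_le_iff₀ (by positivity)] at hklog
          linarith [hklog]
        have h1 : (r:ℝ) ≤ Real.exp (2 * (k:ℝ) * ε ^ 2) :=
          (Real.exp_log hrpos).symm.trans_le (Real.exp_le_exp.2 hlogr)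
        calc Real.exp (s * a + (k:ℝ) *
              (-s * (∑ j, q j * M i j) + s ^ 2 * (mx - mn) ^ 2 / 8))
            ≤ Real.exp (-(2 * (k:ℝ) * ε ^ 2)) := Real.exp_le_exp.2 hexp_le
          _ ≤ 1 / r := by
              rw [Real.exp_neg, one_div]
              exact inv_anti₀ hrpos h1
      calc ∑ ω : Fin k → Fin c,
            (∏ m, q (ω m)) * (if (∑ m, M i (ω m)) < a then (1:ℝ) else 0)
          < ∑ ω : Fin k → Fin c,
            (∏ m, q (ω m)) * Real.exp (s * (a - ∑ m, M i (ω m))) := hstep1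
        _ = Real.exp (s * a) * (∑ j, q j * Real.exp (-s * M i j)) ^ k := hstep2
        _ ≤ Real.exp (s * a) * Real.exp ((k:ℝ) *
            (-s * (∑ j, q j * M i j) + s ^ 2 * (mx - mn) ^ 2 / 8)) :=
            mul_le_mul_of_nonneg_left hstep4 (Real.exp_pos _).le
        _ ≤ 1 / r := hfinal
    have htotal : ∑ i : Fin r, ∑ ω : Fin k → Fin c,
        (∏ m, q (ω m)) * (if (∑ m, M i (ω m)) < a then (1:ℝ) else 0) < 1 := by
      have hrpos : (0:ℝ) < r := by exact_mod_cast hr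
      calc ∑ i : Fin r, ∑ ω : Fin k → Fin c,
            (∏ m, q (ω m)) * (if (∑ m, M i (ω m)) < a then (1:ℝ) else 0)
          < ∑ _i : Fin r, 1 / (r:ℝ) :=
            Finset.sum_lt_sum_of_nonempty Finset.univ_nonempty fun i _ => hrow i
        _ = 1 := by
            rw [Finset.sum_const, Finset.card_univ, Fintype.card_fin, nsmul_eq_mul]
            field_simp
    by_contra hno
    push_neg at hno
    have hN : ∀ ω : Fin k → Fin c,
        (1:ℝ) ≤ ∑ i : Fin r, (if (∑ m, M i (ω m)) < a then (1:ℝ) else 0) := by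
      intro ω
      obtain ⟨i, hi⟩ := hno ω
      calc (1:ℝ) = (if (∑ m, M i (ω m)) < a then (1:ℝ) else 0) := by rw [if_pos hi]
        _ ≤ _ := Finset.single_le_sum
            (f := fun i' => if (∑ m, M i' (ω m)) < a then (1:ℝ) else 0)
            (fun i' _ => by split_ifs <;> norm_num) (Finset.mem_univ i)
    have hbig : (1:ℝ) ≤ ∑ ω : Fin k → Fin c, (∏ m, q (ω m)) *
        ∑ i : Fin r, (if (∑ m, M i (ω m)) < a then (1:ℝ) else 0) := by
      calc (1:ℝ) = ∑ ω : Fin k → Fin c, ∏ m, q (ω m) := hp1.symm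
        _ ≤ _ := Finset.sum_le_sum fun ω _ => by nlinarith [hN ω, hp0 ω]
    have hswap : ∑ ω : Fin k → Fin c, (∏ m, q (ω m)) *
        ∑ i : Fin r, (if (∑ m, M i (ω m)) < a then (1:ℝ) else 0)
        = ∑ i : Fin r, ∑ ω : Fin k → Fin c,
          (∏ m, q (ω m)) * (if (∑ m, M i (ω m)) < a then (1:ℝ) else 0) := by
      simp_rw [Finset.mul_sum]
      rw [Finset.sum_comm]
    rw [hswap] at hbig
    linarith [htotal, hbig]
end

section
/- (Function-family abstraction of Theorem 8: learning or succinct non-uniform PRF.) Let n ≥ 1 and m ≥ 1 be naturals, let X be the type of Boolean strings of length n, let s ≥ 1 be a real number, let F be a nonempty finite set of functions X → Bool, and let 𝒟 be a nonempty finite set of functions (Fin m → X × Bool) → Bool. Then at least one of the following holds: (a) there exists a multiset S of elements of 𝒟 with 1 ≤ card S ≤ ⌈32·s²·Real.log |F|⌉ + 1 such that for every f ∈ F, ∑_{D ∈ S} adv(f,D) ≥ (card S)/(8·s); or (b) there exists a multiset T of elements of F with 1 ≤ card T ≤ ⌈8·s²·Real.log |𝒟|⌉ + 1 such that for every D ∈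 𝒟, ∑_{f ∈ T} adv(f,D) ≤ (card T)/(2·s). (Sums are over multisets with multiplicity.) -/
open scoped Classical

/-- Probability of a predicate under the uniform distribution on a finite type. -/
noncomputable def pr {α : Type*} [Fintype α] (p : α → Prop) : ℝ :=
  ((Finset.univ.filter p).card : ℝ) / (Fintype.card α)

/-- The hybrid sample list: the `j`-th entry is `(x j, f (x j))` if `j < i`
and `(x j, r j)` otherwise. -/
def hybSample {n m : ℕ} (f : (Fin n → Bool) → Bool) (i : ℕ)
    (x : Fin m → (Fin n → Bool)) (r : Fin m → Bool) :
    Fin m → (Fin n → Bool) × Bool :=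
  fun j => if (j : ℕ) < i then (x j, f (x j)) else (x j, r j)

/-- The hybrid probability `P_i(f, D)`. -/
noncomputable def hybProb {n m : ℕ} (f : (Fin n → Bool) → Bool)
    (D : (Fin m → (Fin n → Bool) × Bool) → Bool) (i : ℕ) : ℝ :=
  pr (fun p : (Fin m → (Fin n → Bool)) × (Fin m → Bool) =>
    D (hybSample f i p.1 p.2) = true)

/-- The distinguishing advantage `adv(f, D) = |P_0(f,D) − P_m(f,D)|`. -/
noncomputable def adv {n m : ℕ} (f : (Fin n → Bool) → Bool)
    (D : (Fin m → (Fin n → Bool) × Bool) → Bool) : ℝ :=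
  |hybProb f D 0 - hybProb f D m|

lemma pr_nonneg {α : Type*} [Fintype α] (p : α → Prop) : 0 ≤ pr p :=
  div_nonneg (Nat.cast_nonneg _) (Nat.cast_nonneg _)

lemma pr_le_one {α : Type*} [Fintype α] (p : α → Prop) : pr p ≤ 1 := by
  unfold pr
  rcases Nat.eq_zero_or_pos (Fintype.card α) with h | h
  · simp [h]
  · rw [div_le_one (by exact_mod_cast h)]
    have : (Finset.univ.filter p).card ≤ Finset.univ.card := Finset.card_filter_le _ _
    rw [Finset.card_univ] at this
    exact_mod_cast this

lemma adv_nonneg {n m : ℕ} (f : (Fin n → Bool) → Bool)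
    (D : (Fin m → (Fin n → Bool) × Bool) → Bool) : 0 ≤ adv f D :=
  abs_nonneg _

lemma adv_le_one {n m : ℕ} (f : (Fin n → Bool) → Bool)
    (D : (Fin m → (Fin n → Bool) × Bool) → Bool) : adv f D ≤ 1 := by
  unfold adv
  have h1 := pr_nonneg (α := (Fin m → (Fin n → Bool)) × (Fin m → Bool))
    (fun p => D (hybSample f 0 p.1 p.2) = true)
  have h2 := pr_le_one (α := (Fin m → (Fin n → Bool)) × (Fin m → Bool))
    (fun p => D (hybSample f 0 p.1 p.2) = true)
  have h3 := pr_nonneg (α := (Fin m → (Fin n → Bool)) × (Fin m → Bool))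
    (fun p => D (hybSample f m p.1 p.2) = true)
  have h4 := pr_le_one (α := (Fin m → (Fin n → Bool)) × (Fin m → Bool))
    (fun p => D (hybSample f m p.1 p.2) = true)
  rw [abs_le]
  unfold hybProb
  constructor <;> linarith


private lemma denom_pos {p : ℝ} (hp0 : 0 ≤ p) (hp1 : p ≤ 1) (h : ℝ) :
    0 < 1 - p + p * Real.exp h := by
  rcases le_total (Real.exp h) 1 with hh | hh
  · nlinarith [Real.exp_pos h]
  · nlinarith

/-- The sharp Hoeffding-lemma scalar inequality. -/
lemma key_ineq {p : ℝ} (hp0 : 0 ≤ p) (hp1 : p ≤ 1) (h : ℝ) :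
    1 - p + p * Real.exp h ≤ Real.exp (p * h + h ^ 2 / 8) := by
  set D : ℝ → ℝ := fun x => 1 - p + p * Real.exp x with hD
  have hDpos : ∀ x, 0 < D x := fun x => denom_pos hp0 hp1 x
  set g : ℝ → ℝ := fun x => p * x + x ^ 2 / 8 - Real.log (D x) with hg
  set g' : ℝ → ℝ := fun x => p + x / 4 - p * Real.exp x / D x with hg'
  have hDder : ∀ x, HasDerivAt D (p * Real.exp x) x := by
    intro x
    exact ((Real.hasDerivAt_exp x).const_mul p).const_add (1 - p)
  have hgder : ∀ x, HasDerivAt g (g' x) x := by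
    intro x
    have h1 : HasDerivAt (fun x : ℝ => p * x) p x := by
      simpa using (hasDerivAt_id x).const_mul p
    have h2 : HasDerivAt (fun x : ℝ => x ^ 2 / 8) (x / 4) x := by
      have := (hasDerivAt_pow 2 x).div_const 8
      exact this.congr_deriv (by norm_num; ring)
    have h3 : HasDerivAt (fun x => Real.log (D x)) (p * Real.exp x / D x) x :=
      (hDder x).log (hDpos x).ne'
    exact (h1.add h2).sub h3
  have hg'der : ∀ x, HasDerivAt g'
      (1 / 4 - (p * Real.exp x * D x - p * Real.exp x * (p * Real.exp x)) / (D x) ^ 2) x := by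
    intro x
    have h1 : HasDerivAt (fun x : ℝ => p + x / 4) (1 / 4) x := by
      simpa using ((hasDerivAt_id x).div_const 4).const_add p
    have h2 : HasDerivAt (fun x => p * Real.exp x / D x)
        ((p * Real.exp x * D x - p * Real.exp x * (p * Real.exp x)) / (D x) ^ 2) x :=
      ((Real.hasDerivAt_exp x).const_mul p).div (hDder x) (hDpos x).ne'
    exact h1.sub h2
  have hg''nonneg : ∀ x,
      0 ≤ 1 / 4 - (p * Real.exp x * D x - p * Real.exp x * (p * Real.exp x)) / (D x) ^ 2 := by
    intro x
    have hDx := hDpos x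
    have hE : 0 ≤ p * Real.exp x := by positivity
    rw [sub_nonneg, div_le_iff₀ (by positivity)]
    have key : ∀ E Dv : ℝ, E * Dv - E * E ≤ 1 / 4 * Dv ^ 2 := fun E Dv => by
      nlinarith [sq_nonneg (Dv - 2 * E)]
    have := key (p * Real.exp x) (D x)
    linarith
  have hg'mono : Monotone g' := by
    apply monotone_of_deriv_nonneg
    · exact fun x => (hg'der x).differentiableAt
    · intro x
      rw [(hg'der x).deriv]
      exact hg''nonneg x
  have hg'0 : g' 0 = 0 := by
    simp [hg', hD]
  have hgcont : Continuous g := by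
    have : Differentiable ℝ g := fun x => (hgder x).differentiableAt
    exact this.continuous
  have hgderiv : ∀ x, deriv g x = g' x := fun x => (hgder x).deriv
  have hg0 : g 0 = 0 := by simp [hg, hD]
  have hmain : ∀ x, 0 ≤ g x := by
    intro x
    rcases le_total 0 x with hx | hx
    · have hmono : MonotoneOn g (Set.Ici (0 : ℝ)) := by
        apply monotoneOn_of_deriv_nonneg (convex_Ici 0) hgcont.continuousOn
        · intro y _
          exact (hgder y).differentiableAt.differentiableWithinAt
        · intro y hy
          rw [hgderiv y]
          have : (0 : ℝ) ≤ y := le_of_lt (by simpa using hy)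
          calc (0 : ℝ) = g' 0 := hg'0.symm
            _ ≤ g' y := hg'mono this
      have := hmono Set.self_mem_Ici (by exact hx) hx
      linarith [hg0 ▸ this]
    · have hanti : AntitoneOn g (Set.Iic (0 : ℝ)) := by
        apply antitoneOn_of_deriv_nonpos (convex_Iic 0) hgcont.continuousOn
        · intro y _
          exact (hgder y).differentiableAt.differentiableWithinAt
        · intro y hy
          rw [hgderiv y]
          have hy' : y ≤ 0 := le_of_lt (by simpa using hy)
          calc g' y ≤ g' 0 := hg'mono hy'
            _ = 0 := hg'0
      have := hanti (by exact hx : x ∈ Set.Iic (0:ℝ)) Set.self_mem_Iic hx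
      linarith [hg0 ▸ this]
  have := hmain h
  have hlog : Real.log (D h) ≤ p * h + h ^ 2 / 8 := by
    simp only [hg] at this; linarith
  calc D h = Real.exp (Real.log (D h)) := (Real.exp_log (hDpos h)).symm
    _ ≤ Real.exp (p * h + h ^ 2 / 8) := Real.exp_le_exp.mpr hlog

/-- Hoeffding-style sparsification: a mixed strategy `q` can be replaced by a
`k`-uniform one losing at most `t` against each of the `Fintype.card κ` tests. -/
lemma sparse_sample {ι κ : Type*} [Fintype ι] [Nonempty ι] [Fintype κ]
    (q : ι → ℝ) (hq0 : ∀ i, 0 ≤ q i) (hq1 : ∑ i, q i = 1)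
    (g : κ → ι → ℝ) (hg0 : ∀ c i, 0 ≤ g c i) (hg1 : ∀ c i, g c i ≤ 1)
    (k : ℕ) (t : ℝ) (ht : 0 < t)
    (hkt : Real.log (Fintype.card κ) < 2 * k * t ^ 2) :
    ∃ σ : Fin k → ι, ∀ c, (k : ℝ) * ((∑ i, q i * g c i) - t) ≤ ∑ j, g c (σ j) := by
  by_contra hcon
  push_neg at hcon
  cases isEmpty_or_nonempty κ with
  | inl hemp => obtain ⟨c, -⟩ := hcon (fun _ => Classical.arbitrary ι); exact hemp.elim c
  | inr hne =>
  set N : ℕ := Fintype.card κ with hN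
  have hN1 : 1 ≤ N := Fintype.card_pos
  -- weights
  set w : (Fin k → ι) → ℝ := fun σ => ∏ j, q (σ j) with hw
  have hw0 : ∀ σ, 0 ≤ w σ := fun σ => Finset.prod_nonneg fun j _ => hq0 _
  have hwsum : ∑ σ : Fin k → ι, w σ = 1 := by
    rw [hw, ← Fintype.prod_sum (f := fun (_ : Fin k) (i : ι) => q i)]
    simp [hq1]
  set μ : κ → ℝ := fun c => ∑ i, q i * g c i with hμ
  have hμ0 : ∀ c, 0 ≤ μ c := fun c => Finset.sum_nonneg fun i _ => mul_nonneg (hq0 i) (hg0 c i)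
  have hμ1 : ∀ c, μ c ≤ 1 := by
    intro c
    calc μ c ≤ ∑ i, q i := Finset.sum_le_sum fun i _ => by
          nlinarith [hq0 i, hg1 c i, hg0 c i]
      _ = 1 := hq1
  set lam : ℝ := 4 * t with hlam
  -- per-test Chernoff bound
  have chern : ∀ c : κ,
      ∑ σ ∈ Finset.univ.filter (fun σ : Fin k → ι => ∑ j, g c (σ j) < k * (μ c - t)), w σ
        ≤ Real.exp (-(2 * k * t ^ 2)) := by
    intro c
    have hstep : ∀ σ ∈ Finset.univ.filter
        (fun σ : Fin k → ι => ∑ j, g c (σ j) < k * (μ c - t)),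
        w σ ≤ w σ * Real.exp (lam * (k * (μ c - t) - ∑ j, g c (σ j))) := by
      intro σ hσ
      rw [Finset.mem_filter] at hσ
      have h1 : (1 : ℝ) ≤ Real.exp (lam * (k * (μ c - t) - ∑ j, g c (σ j))) := by
        rw [← Real.exp_zero]
        apply Real.exp_le_exp.mpr
        have : 0 < k * (μ c - t) - ∑ j, g c (σ j) := by linarith [hσ.2]
        positivity
      nlinarith [hw0 σ]
    calc ∑ σ ∈ Finset.univ.filter (fun σ : Fin k → ι => ∑ j, g c (σ j) < k * (μ c - t)), w σ
        ≤ ∑ σ ∈ Finset.univ.filter (fun σ : Fin k → ι => ∑ j, g c (σ j) < k * (μ c - t)),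
            w σ * Real.exp (lam * (k * (μ c - t) - ∑ j, g c (σ j))) :=
          Finset.sum_le_sum hstep
      _ ≤ ∑ σ : Fin k → ι, w σ * Real.exp (lam * (k * (μ c - t) - ∑ j, g c (σ j))) := by
          apply Finset.sum_le_sum_of_subset_of_nonneg (Finset.filter_subset _ _)
          intro σ _ _
          exact mul_nonneg (hw0 σ) (Real.exp_pos _).le
      _ = Real.exp (lam * k * (μ c - t)) *
            ∑ σ : Fin k → ι, ∏ j, (q (σ j) * Real.exp (-lam * g c (σ j))) := by
          rw [Finset.mul_sum]
          apply Finset.sum_congr rfl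
          intro σ _
          rw [Finset.prod_mul_distrib, ← Real.exp_sum]
          have hsum : ∑ j : Fin k, -lam * g c (σ j) = -lam * ∑ j : Fin k, g c (σ j) :=
            (Finset.mul_sum _ _ _).symm
          rw [hsum, mul_left_comm, ← Real.exp_add]
          simp only [hw]
          congr 1
          ring
      _ = Real.exp (lam * k * (μ c - t)) * (∑ i, q i * Real.exp (-lam * g c i)) ^ k := by
          congr 1
          rw [← Fintype.prod_sum (f := fun (_ : Fin k) (i : ι) => q i * Real.exp (-lam * g c i))]
          simp
      _ ≤ Real.exp (lam * k * (μ c - t)) * Real.exp (μ c * (-lam) + (-lam) ^ 2 / 8) ^ k := by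
          apply mul_le_mul_of_nonneg_left _ (Real.exp_pos _).le
          apply pow_le_pow_left₀
          · exact Finset.sum_nonneg fun i _ =>
              mul_nonneg (hq0 i) (Real.exp_pos _).le
          have hbd : ∑ i, q i * Real.exp (-lam * g c i)
              ≤ 1 - μ c + μ c * Real.exp (-lam) := by
            have hterm : ∀ i, q i * Real.exp (-lam * g c i)
                ≤ q i * (1 - g c i + g c i * Real.exp (-lam)) := by
              intro i
              apply mul_le_mul_of_nonneg_left _ (hq0 i)
              have hcvx := (convexOn_exp.2 (Set.mem_univ (0 : ℝ)) (Set.mem_univ (-lam))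
                (by linarith [hg1 c i] : (0:ℝ) ≤ 1 - g c i) (hg0 c i) (by ring))
              simp only [smul_eq_mul, mul_zero, Real.exp_zero, mul_one] at hcvx
              calc Real.exp (-lam * g c i) = Real.exp ((1 - g c i) * 0 + g c i * -lam) := by
                    ring_nf
                _ ≤ (1 - g c i) * 1 + g c i * Real.exp (-lam) := by
                    simpa using hcvx
                _ = 1 - g c i + g c i * Real.exp (-lam) := by ring
            calc ∑ i, q i * Real.exp (-lam * g c i)
                ≤ ∑ i, q i * (1 - g c i + g c i * Real.exp (-lam)) :=
                  Finset.sum_le_sum fun i _ => hterm i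
              _ = (∑ i, q i) - (∑ i, q i * g c i) + (∑ i, q i * g c i) * Real.exp (-lam) := by
                  rw [Finset.sum_mul, ← Finset.sum_sub_distrib, ← Finset.sum_add_distrib]
                  apply Finset.sum_congr rfl
                  intro i _; ring
              _ = 1 - μ c + μ c * Real.exp (-lam) := by rw [hq1]
          exact hbd.trans (key_ineq (hμ0 c) (hμ1 c) (-lam))
      _ = Real.exp (lam * k * (μ c - t) + k * (μ c * (-lam) + (-lam) ^ 2 / 8)) := by
          rw [← Real.exp_nat_mul, ← Real.exp_add]
      _ = Real.exp (-(lam * k * t) + k * lam ^ 2 / 8) := by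
          congr 1; ring
      _ = Real.exp (-(2 * k * t ^ 2)) := by
          congr 1; rw [hlam]; ring
  -- union bound
  have hcover : ∀ σ : Fin k → ι, ∃ c, ∑ j, g c (σ j) < k * (μ c - t) := by
    intro σ
    obtain ⟨c, hc⟩ := hcon σ
    exact ⟨c, by rw [hμ]; linarith [hc]⟩
  have hub : (1 : ℝ) ≤ ∑ c : κ, ∑ σ ∈ Finset.univ.filter
      (fun σ : Fin k → ι => ∑ j, g c (σ j) < k * (μ c - t)), w σ := by
    rw [← hwsum]
    have hpt : ∀ σ : Fin k → ι, w σ ≤ ∑ c : κ,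
        if ∑ j, g c (σ j) < k * (μ c - t) then w σ else 0 := by
      intro σ
      obtain ⟨c₀, hc₀⟩ := hcover σ
      calc w σ = if ∑ j, g c₀ (σ j) < k * (μ c₀ - t) then w σ else 0 := by
            rw [if_pos hc₀]
        _ ≤ ∑ c : κ, if ∑ j, g c (σ j) < k * (μ c - t) then w σ else 0 := by
            apply Finset.single_le_sum (f := fun c : κ =>
              if ∑ j, g c (σ j) < k * (μ c - t) then w σ else 0) _ (Finset.mem_univ c₀)
            intro c _
            split <;> simp [hw0 σ]
    calc ∑ σ : Fin k → ι, w σ ≤ ∑ σ : Fin k → ι, ∑ c : κ,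
          (if ∑ j, g c (σ j) < k * (μ c - t) then w σ else 0) :=
          Finset.sum_le_sum fun σ _ => hpt σ
      _ = ∑ c : κ, ∑ σ ∈ Finset.univ.filter
          (fun σ : Fin k → ι => ∑ j, g c (σ j) < k * (μ c - t)), w σ := by
          rw [Finset.sum_comm]
          apply Finset.sum_congr rfl
          intro c _
          rw [Finset.sum_filter]
  have hfin : (1 : ℝ) ≤ N * Real.exp (-(2 * k * t ^ 2)) := by
    calc (1:ℝ) ≤ _ := hub
      _ ≤ ∑ _c : κ, Real.exp (-(2 * k * t ^ 2)) := Finset.sum_le_sum fun c _ => chern c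
      _ = N * Real.exp (-(2 * k * t ^ 2)) := by
          rw [Finset.sum_const]
          simp [hN]
  have hstrict : (N : ℝ) * Real.exp (-(2 * k * t ^ 2)) < 1 := by
    have hNpos : (0 : ℝ) < N := by exact_mod_cast hN1
    have : Real.exp (-(2 * k * t ^ 2)) < Real.exp (-Real.log N) :=
      Real.exp_lt_exp.mpr (by simpa [hN] using neg_lt_neg hkt)
    have h2 : Real.exp (-Real.log N) = 1 / N := by
      rw [Real.exp_neg, Real.exp_log hNpos]
      ring
    rw [h2] at this
    calc (N:ℝ) * Real.exp (-(2 * k * t ^ 2)) < N * (1 / N) :=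
        (mul_lt_mul_iff_right₀ hNpos).mpr this
      _ = 1 := by field_simp
  linarith

/-- Finite zero-sum minimax: there is a value `v`, a mixed column strategy `q`
guaranteeing at least `v` against every row, and a mixed row strategy `p`
guaranteeing at most `v` against every column. -/
lemma minimax_pair {α β : Type*} [Fintype α] [Fintype β] [Nonempty α] [Nonempty β]
    (A : α → β → ℝ) :
    ∃ (v : ℝ) (q : β → ℝ) (p : α → ℝ),
      (∀ b, 0 ≤ q b) ∧ (∑ b, q b) = 1 ∧ (∀ a, 0 ≤ p a) ∧ (∑ a, p a) = 1 ∧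
      (∀ a, v ≤ ∑ b, q b * A a b) ∧ (∀ b, ∑ a, p a * A a b ≤ v) := by
  classical
  set Φ : (β → ℝ) → (α → ℝ) := fun w a => ∑ b, w b * A a b with hΦ
  have hΦcont : Continuous Φ := by
    apply continuous_pi
    intro a
    exact continuous_finset_sum _ fun b _ => (continuous_apply b).mul continuous_const
  set mfun : (α → ℝ) → ℝ := fun y => Finset.univ.inf' Finset.univ_nonempty y with hm
  have hmcont : Continuous mfun := by
    have h := Continuous.finset_inf'_apply (f := fun (i : α) (y : α → ℝ) => y i)
      (s := (Finset.univ : Finset α)) Finset.univ_nonempty (fun i _ => continuous_apply i)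
    convert h using 2
  have hΔc : IsCompact (stdSimplex ℝ β) := isCompact_stdSimplex ℝ β
  have hΔne : (stdSimplex ℝ β).Nonempty := by
    obtain ⟨b₀⟩ := ‹Nonempty β›
    refine ⟨fun b => if b = b₀ then 1 else 0, fun b => by positivity, by simp⟩
  obtain ⟨q, hqΔ, hqmax⟩ := hΔc.exists_isMaxOn hΔne (hmcont.comp hΦcont).continuousOn
  set v : ℝ := mfun (Φ q) with hv
  have hq0 : ∀ b, 0 ≤ q b := hqΔ.1
  have hq1 : ∑ b, q b = 1 := hqΔ.2
  have hqv : ∀ a, v ≤ ∑ b, q b * A a b := by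
    intro a
    have := Finset.inf'_le (Φ q) (Finset.mem_univ a)
    exact this
  -- separation
  set U : Set (α → ℝ) := Set.univ.pi (fun _ : α => Set.Ioi v) with hU
  have hUopen : IsOpen U := isOpen_set_pi Set.finite_univ fun _ _ => isOpen_Ioi
  have hUconv : Convex ℝ U := convex_pi fun _ _ => convex_Ioi v
  have hUmem : ∀ y : α → ℝ, (∀ a, v < y a) → y ∈ U := by
    intro y hy
    exact fun a _ => hy a
  set K : Set (α → ℝ) := Φ '' stdSimplex ℝ β with hK
  have hKconv : Convex ℝ K := by
    apply Convex.is_linear_image (convex_stdSimplex ℝ β)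
    constructor
    · intro x y; funext a
      simp only [hΦ, Pi.add_apply, add_mul]
      rw [Finset.sum_add_distrib]
    · intro r x; funext a
      simp only [hΦ, Pi.smul_apply, smul_eq_mul, Finset.mul_sum]
      apply Finset.sum_congr rfl
      intro b _; ring
  have hdisj : Disjoint U K := by
    rw [Set.disjoint_left]
    rintro y hyU ⟨w, hwΔ, rfl⟩
    have h1 : mfun (Φ w) ≤ v := hqmax hwΔ
    have h2 : v < mfun (Φ w) := by
      rw [hm]
      rw [Finset.lt_inf'_iff]
      intro a _
      exact hyU a (Set.mem_univ a)
    linarith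
  obtain ⟨φ, u, hφU, hφK⟩ := geometric_hahn_banach_open hUconv hUopen hKconv hdisj
  set c : α → ℝ := fun a => φ (fun j => if a = j then 1 else 0) with hc
  have hφeq : ∀ y : α → ℝ, φ y = ∑ a, y a * c a := by
    intro y
    conv_lhs => rw [pi_eq_sum_univ y]
    rw [map_sum]
    apply Finset.sum_congr rfl
    intro a _
    rw [map_smul]
    simp [hc, smul_eq_mul]
  have honemem : ∀ r : ℝ, v < r → (fun _ : α => r) ∈ U := fun r hr => hUmem _ fun _ => hr
  have hcnonpos : ∀ a₀, c a₀ ≤ 0 := by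
    intro a₀
    by_contra hpos
    push_neg at hpos
    have hone := hφU _ (honemem (v + 1) (by linarith))
    set M : ℝ := (u - φ (fun _ => v + 1)) / c a₀ with hM
    have hMpos : 0 < M := div_pos (by linarith) hpos
    have hymem : (fun j => (v + 1) + M * (if a₀ = j then 1 else 0)) ∈ U := by
      apply hUmem
      intro a
      split <;> nlinarith
    have hval : φ (fun j => (v + 1) + M * (if a₀ = j then 1 else 0)) = u := by
      have : (fun j => (v + 1) + M * (if a₀ = j then 1 else 0))
          = (fun _ : α => v + 1) + M • (fun j => if a₀ = j then (1:ℝ) else 0) := by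
        funext j; simp [Pi.add_apply, Pi.smul_apply, smul_eq_mul]
      rw [this, map_add, map_smul, smul_eq_mul]
      show φ (fun _ : α => v + 1) + M * c a₀ = u
      rw [hM, div_mul_cancel₀ _ (ne_of_gt hpos)]
      ring
    have := hφU _ hymem
    rw [hval] at this
    exact lt_irrefl u this
  set Csum : ℝ := ∑ a, c a with hCsum
  have hKne : K.Nonempty := ⟨Φ hΔne.choose, hΔne.choose, hΔne.choose_spec, rfl⟩
  obtain ⟨y₀, hy₀K⟩ := hKne
  have hCneg : Csum < 0 := by
    rcases lt_or_eq_of_le (Finset.sum_nonpos (fun a _ => hcnonpos a) : Csum ≤ 0) with h | h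
    · exact h
    · exfalso
      have hall : ∀ a, c a = 0 := by
        intro a
        have h' := (Finset.sum_eq_zero_iff_of_nonpos (fun a _ => hcnonpos a)).mp h
        exact h' a (Finset.mem_univ a)
      have hzero : ∀ y : α → ℝ, φ y = 0 := by
        intro y; rw [hφeq]; simp [hall]
      have h1 := hφU _ (honemem (v + 1) (by linarith))
      rw [hzero] at h1
      have h2 := hφK _ hy₀K
      rw [hzero] at h2
      linarith
  have hconst : ∀ r : ℝ, φ (fun _ => r) = r * Csum := by
    intro r
    rw [hφeq, hCsum, Finset.mul_sum]
  have hvCu : v * Csum ≤ u := by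
    by_contra hlt
    push_neg at hlt
    have hCne : Csum ≠ 0 := hCneg.ne
    set ε : ℝ := (v * Csum - u) / (-Csum) with hε
    have hεpos : 0 < ε := div_pos (by linarith) (by linarith)
    have hlt2 := hφU _ (honemem (v + ε) (by linarith))
    rw [hconst (v + ε)] at hlt2
    have heq : (v + ε) * Csum = u := by
      have h1 : ε * (-Csum) = v * Csum - u := by
        rw [hε]; exact div_mul_cancel₀ _ (neg_ne_zero.mpr hCne)
      linear_combination (-1 : ℝ) * h1
    rw [heq] at hlt2
    exact lt_irrefl u hlt2
  set p : α → ℝ := fun a => c a / Csum with hp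
  refine ⟨v, q, p, hq0, hq1, ?_, ?_, hqv, ?_⟩
  · intro a
    have h := div_nonneg (neg_nonneg.mpr (hcnonpos a)) (neg_nonneg.mpr hCneg.le)
    rwa [neg_div_neg_eq] at h
  · show (∑ a, c a / Csum) = 1
    rw [← Finset.sum_div, ← hCsum]
    exact div_self hCneg.ne
  · intro b
    set e : β → ℝ := fun b' => if b = b' then 1 else 0 with he
    have heΔ : e ∈ stdSimplex ℝ β := ⟨fun b' => by positivity, by simp [he]⟩
    have hΦe : Φ e = fun a => A a b := by
      funext a
      simp [hΦ, he, ite_mul]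
    have hK' : (fun a => A a b) ∈ K := ⟨e, heΔ, hΦe⟩
    have h1 : u ≤ ∑ a, A a b * c a := by
      have := hφK _ hK'
      rwa [hφeq] at this
    have h2 : v * Csum ≤ ∑ a, A a b * c a := le_trans hvCu h1
    have hsum : ∑ a, p a * A a b = (∑ a, A a b * c a) / Csum := by
      rw [Finset.sum_div]
      apply Finset.sum_congr rfl
      intro a _
      rw [hp]
      ring
    rw [hsum, div_le_iff_of_neg hCneg]
    linarith

theorem stmt8 {n m : ℕ} (hn : 1 ≤ n) (hm : 1 ≤ m) (s : ℝ) (hs : 1 ≤ s)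
    (F : Finset ((Fin n → Bool) → Bool)) (hF : F.Nonempty)
    (𝒟 : Finset ((Fin m → (Fin n → Bool) × Bool) → Bool)) (h𝒟 : 𝒟.Nonempty) :
    (∃ S : Multiset ((Fin m → (Fin n → Bool) × Bool) → Bool),
        (∀ D ∈ S, D ∈ 𝒟) ∧
        1 ≤ Multiset.card S ∧
        Multiset.card S ≤ ⌈32 * s ^ 2 * Real.log F.card⌉₊ + 1 ∧
        ∀ f ∈ F, (S.map (fun D => adv f D)).sum ≥ (Multiset.card S : ℝ) / (8 * s)) ∨
    (∃ T : Multiset ((Fin n → Bool) → Bool),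
        (∀ f ∈ T, f ∈ F) ∧
        1 ≤ Multiset.card T ∧
        Multiset.card T ≤ ⌈8 * s ^ 2 * Real.log 𝒟.card⌉₊ + 1 ∧
        ∀ D ∈ 𝒟, (T.map (fun f => adv f D)).sum ≤ (Multiset.card T : ℝ) / (2 * s)) := by
  classical
  haveI hFne : Nonempty {f // f ∈ F} := Finset.nonempty_coe_sort.mpr hF
  haveI hDne : Nonempty {D // D ∈ 𝒟} := Finset.nonempty_coe_sort.mpr h𝒟
  have hs0 : (0 : ℝ) < s := lt_of_lt_of_le one_pos hs
  obtain ⟨v, q, p, hq0, hq1, hp0, hp1, hqv, hpv⟩ :=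
    minimax_pair (fun (f : {f // f ∈ F}) (D : {D // D ∈ 𝒟}) => adv f.1 D.1)
  by_cases hv : 1 / (4 * s) ≤ v
  · -- learning branch
    left
    set k : ℕ := ⌈32 * s ^ 2 * Real.log F.card⌉₊ + 1 with hk
    have hkR : (32 * s ^ 2 * Real.log F.card : ℝ) < k := by
      have h1 := Nat.le_ceil (32 * s ^ 2 * Real.log (F.card : ℝ))
      have h2 : ((⌈32 * s ^ 2 * Real.log (F.card : ℝ)⌉₊ : ℝ)) < k := by
        rw [hk]; push_cast; linarith
      linarith
    have hkt : Real.log (Fintype.card {f // f ∈ F}) < 2 * k * (1 / (8 * s)) ^ 2 := by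
      have hcard : (Fintype.card {f // f ∈ F} : ℝ) = F.card := by
        exact_mod_cast Fintype.card_coe F
      rw [hcard]
      have h2 : 2 * (k : ℝ) * (1 / (8 * s)) ^ 2 = k / (32 * s ^ 2) := by
        field_simp; ring
      rw [h2, lt_div_iff₀ (by positivity)]
      nlinarith [hkR]
    obtain ⟨σ, hσ⟩ := sparse_sample q hq0 hq1
      (fun (f : {f // f ∈ F}) (D : {D // D ∈ 𝒟}) => adv f.1 D.1)
      (fun c i => adv_nonneg _ _) (fun c i => adv_le_one _ _)
      k (1 / (8 * s)) (by positivity) hkt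
    set S : Multiset ((Fin m → (Fin n → Bool) × Bool) → Bool) :=
      Finset.univ.val.map (fun j : Fin k => (σ j).1) with hS
    have hcardS : Multiset.card S = k := by
      rw [hS, Multiset.card_map]
      simp
    refine ⟨S, ?_, ?_, ?_, ?_⟩
    · intro D hD
      rw [hS, Multiset.mem_map] at hD
      obtain ⟨j, -, rfl⟩ := hD
      exact (σ j).2
    · rw [hcardS, hk]; omega
    · rw [hcardS, hk]
    · intro f hf
      have h := hσ ⟨f, hf⟩
      have hmean := hqv ⟨f, hf⟩
      have hsum : ((S.map (fun D => adv f D)).sum : ℝ) = ∑ j : Fin k, adv f (σ j).1 := by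
        rw [hS, Multiset.map_map]
        rfl
      rw [ge_iff_le, hcardS, hsum]
      have hknn : (0 : ℝ) ≤ (k : ℝ) := Nat.cast_nonneg k
      have step1 : (k : ℝ) * (v - 1 / (8 * s)) ≤
          (k : ℝ) * ((∑ D : {D // D ∈ 𝒟}, q D * adv f D.1) - 1 / (8 * s)) := by
        apply mul_le_mul_of_nonneg_left _ hknn
        linarith
      have e1 : (k : ℝ) / (8 * s) ≤ (k : ℝ) * (v - 1 / (8 * s)) := by
        have e2 : 1 / (4 * s) - 1 / (8 * s) = 1 / (8 * s) := by
          field_simp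
          ring
        have e3 : (k : ℝ) / (8 * s) = (k : ℝ) * (1 / (8 * s)) := by ring
        rw [e3, ← e2]
        apply mul_le_mul_of_nonneg_left _ hknn
        linarith
      linarith
  · -- PRF branch
    right
    push_neg at hv
    set k : ℕ := ⌈8 * s ^ 2 * Real.log 𝒟.card⌉₊ + 1 with hk
    have hkR : (8 * s ^ 2 * Real.log 𝒟.card : ℝ) < k := by
      have h1 := Nat.le_ceil (8 * s ^ 2 * Real.log (𝒟.card : ℝ))
      have h2 : ((⌈8 * s ^ 2 * Real.log (𝒟.card : ℝ)⌉₊ : ℝ)) < k := by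
        rw [hk]; push_cast; linarith
      linarith
    have hkt : Real.log (Fintype.card {D // D ∈ 𝒟}) < 2 * k * (1 / (4 * s)) ^ 2 := by
      have hcard : (Fintype.card {D // D ∈ 𝒟} : ℝ) = 𝒟.card := by
        exact_mod_cast Fintype.card_coe 𝒟
      rw [hcard]
      have h2 : 2 * (k : ℝ) * (1 / (4 * s)) ^ 2 = k / (8 * s ^ 2) := by
        field_simp; ring
      rw [h2, lt_div_iff₀ (by positivity)]
      nlinarith [hkR]
    obtain ⟨σ, hσ⟩ := sparse_sample p hp0 hp1
      (fun (D : {D // D ∈ 𝒟}) (f : {f // f ∈ F}) => 1 - adv f.1 D.1)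
      (fun c i => by linarith [adv_le_one (i.1) (c.1)])
      (fun c i => by linarith [adv_nonneg (i.1) (c.1)])
      k (1 / (4 * s)) (by positivity) hkt
    set T : Multiset ((Fin n → Bool) → Bool) :=
      Finset.univ.val.map (fun j : Fin k => (σ j).1) with hT
    have hcardT : Multiset.card T = k := by
      rw [hT, Multiset.card_map]
      simp
    refine ⟨T, ?_, ?_, ?_, ?_⟩
    · intro f hf
      rw [hT, Multiset.mem_map] at hf
      obtain ⟨j, -, rfl⟩ := hf
      exact (σ j).2
    · rw [hcardT, hk]; omega
    · rw [hcardT, hk]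
    · intro D hD
      have h := hσ ⟨D, hD⟩
      have hmean := hpv ⟨D, hD⟩
      have hsum : ((T.map (fun f => adv f D)).sum : ℝ) = ∑ j : Fin k, adv (σ j).1 D := by
        rw [hT, Multiset.map_map]
        rfl
      rw [hcardT, hsum]
      have hknn : (0 : ℝ) ≤ (k : ℝ) := Nat.cast_nonneg k
      have hsplit : ∑ f : {f // f ∈ F}, p f * (1 - adv f.1 D) =
          (∑ f : {f // f ∈ F}, p f) - ∑ f : {f // f ∈ F}, p f * adv f.1 D := by
        rw [← Finset.sum_sub_distrib]
        apply Finset.sum_congr rfl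
        intro f _; ring
      have hRHS : ∑ j : Fin k, (1 - adv (σ j).1 D) =
          (k : ℝ) - ∑ j : Fin k, adv (σ j).1 D := by
        rw [Finset.sum_sub_distrib, Finset.sum_const, Finset.card_univ]
        simp
      rw [hsplit, hp1] at h
      rw [hRHS] at h
      -- h : k * ((1 - ∑ p adv) - 1/(4s)) ≤ k - ∑_j adv
      -- hmean : ∑ p adv ≤ v,  hv : v < 1/(4s)
      have hfinal : ∑ j : Fin k, adv (σ j).1 D ≤
          (k : ℝ) * ((∑ f : {f // f ∈ F}, p f * adv f.1 D) + 1 / (4 * s)) := by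
        nlinarith [h]
      have e2 : 1 / (4 * s) + 1 / (4 * s) = 1 / (2 * s) := by
        field_simp
        ring
      have e3 : (k : ℝ) * ((∑ f : {f // f ∈ F}, p f * adv f.1 D) + 1 / (4 * s)) ≤
          (k : ℝ) * (1 / (4 * s) + 1 / (4 * s)) := by
        apply mul_le_mul_of_nonneg_left _ hknn
        linarith
      have e4 : (k : ℝ) * (1 / (4 * s) + 1 / (4 * s)) = (k : ℝ) / (2 * s) := by
        rw [e2]; ring
      linarith
end
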